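/- arXiv:0904.2441 — 2 statements merged into one kernel-verified Lean document; each statement's English description precedes it below -/
import Mathlib

section
/- Fix p ∈ [0,1). As N → ∞, the quantity 2N(p - p^{2N})/(2N - 1) + p^{2N} tends to p; hence the expected value of the error-probability estimator g over a multinomial (K1,K2,K3) with N trials and category probabilities ((1-p)^2, 2p(1-p), p^2) converges to p, i.e., the estimator is asymptotically unbiased. -/
open Finset

/-- Joint probability mass function of `(K1, K2)` where `(K1, K2, K3)` is multinomial with
`N` trials and category probabilities `((1-p)^2, 2p(1-p), p^2)` (with `K3 = N - K1 - K2`). -/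
noncomputable def multinomialPMF (N : ℕ) (p : ℝ) (k1 k2 : ℕ) : ℝ :=
  ((N.factorial : ℝ) / (k1.factorial * k2.factorial * (N - k1 - k2).factorial)) *
    (1 - p) ^ (2 * k1) * (2 * (1 - p) * p) ^ k2 * p ^ (2 * (N - k1 - k2))

/-- The error-probability estimator. -/
noncomputable def g (k1 k2 : ℕ) : ℝ :=
  if k1 = 0 ∧ k2 = 0 then 1
  else if k2 = 0 then 0
  else (k2 : ℝ) / (2 * k1 + k2)

/-- Expected value of `g (K1, K2)` under the multinomial distribution. -/
noncomputable def expectation_g (N : ℕ) (p : ℝ) : ℝ :=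
  ∑ k1 ∈ Finset.range (N + 1), ∑ k2 ∈ Finset.range (N - k1 + 1),
    g k1 k2 * multinomialPMF N p k1 k2

lemma trinomial (x y z : ℝ) (M : ℕ) :
    ∑ k1 ∈ range (M+1), ∑ k2 ∈ range (M - k1 + 1),
      ((M.factorial : ℝ) / (k1.factorial * k2.factorial * (M - k1 - k2).factorial))
        * x ^ k1 * y ^ k2 * z ^ (M - k1 - k2) = (x + y + z) ^ M := by
  rw [show x + y + z = x + (y + z) by ring, add_pow]
  refine Finset.sum_congr rfl fun k1 hk1 => ?_
  have hk1' : k1 ≤ M := Nat.lt_succ_iff.mp (mem_range.mp hk1)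
  rw [add_pow, Finset.mul_sum, Finset.sum_mul]
  refine Finset.sum_congr rfl fun k2 hk2 => ?_
  have hk2' : k2 ≤ M - k1 := Nat.lt_succ_iff.mp (mem_range.mp hk2)
  rw [Nat.cast_choose ℝ hk1', Nat.cast_choose ℝ hk2']
  have h1 : (k1.factorial : ℝ) ≠ 0 := Nat.cast_ne_zero.mpr k1.factorial_ne_zero
  have h2 : (k2.factorial : ℝ) ≠ 0 := Nat.cast_ne_zero.mpr k2.factorial_ne_zero
  have h3 : ((M - k1).factorial : ℝ) ≠ 0 := Nat.cast_ne_zero.mpr (M - k1).factorial_ne_zero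
  have h4 : ((M - k1 - k2).factorial : ℝ) ≠ 0 :=
    Nat.cast_ne_zero.mpr (M - k1 - k2).factorial_ne_zero
  field_simp

/-- integrand -/
noncomputable def u (M : ℕ) (p : ℝ) (k1 i : ℕ) (t : ℝ) : ℝ :=
  (2*((M:ℝ)+1)*p*(1-p)) * (((M.factorial : ℝ)/(k1.factorial * i.factorial * (M-k1-i).factorial))
    * (((1-p)*t)^2)^k1 * (2*p*(1-p)*t)^i * (p^2)^(M-k1-i))

lemma u_integral (M : ℕ) (p : ℝ) (k1 i : ℕ) (hk1 : k1 ≤ M) (hi : i ≤ M - k1) :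
    ∫ t in (0:ℝ)..1, u M p k1 i t
      = g k1 (i+1) * multinomialPMF (M+1) p k1 (i+1) := by
  have hC : ∫ t in (0:ℝ)..1, u M p k1 i t
      = ((2*((M:ℝ)+1)*p*(1-p)) * (((M.factorial : ℝ)/(k1.factorial * i.factorial * (M-k1-i).factorial))
        * ((1-p)^2)^k1 * (2*p*(1-p))^i * (p^2)^(M-k1-i))) * (1/(2*(k1:ℝ)+(i:ℝ)+1)) := by
    have h1 : ∀ t : ℝ, u M p k1 i t
        = ((2*((M:ℝ)+1)*p*(1-p)) * (((M.factorial : ℝ)/(k1.factorial * i.factorial * (M-k1-i).factorial))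
        * ((1-p)^2)^k1 * (2*p*(1-p))^i * (p^2)^(M-k1-i))) * t^(2*k1+i) := by
      intro t
      unfold u
      rw [show ((1-p)*t)^2 = (1-p)^2 * t^2 by ring, mul_pow ((1-p)^2) (t^2) k1,
        mul_pow (2*p*(1-p)) t i, ← pow_mul t 2 k1, pow_add t]
      ring
    rw [intervalIntegral.integral_congr (g := fun t =>
      ((2*((M:ℝ)+1)*p*(1-p)) * (((M.factorial : ℝ)/(k1.factorial * i.factorial * (M-k1-i).factorial))
        * ((1-p)^2)^k1 * (2*p*(1-p))^i * (p^2)^(M-k1-i))) * t^(2*k1+i)) (fun t _ => h1 t),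
      intervalIntegral.integral_const_mul, integral_pow]
    norm_num
  rw [hC]
  have hsub : (M+1) - k1 - (i+1) = M - k1 - i := by omega
  unfold g multinomialPMF
  rw [if_neg (by simp), if_neg (by simp), hsub]
  have e1 : ((M+1).factorial : ℝ) = ((M:ℝ)+1) * M.factorial := by
    rw [Nat.factorial_succ]; push_cast; ring
  have e2 : ((i+1).factorial : ℝ) = ((i:ℝ)+1) * i.factorial := by
    rw [Nat.factorial_succ]; push_cast; ring
  rw [e1, e2]
  have h1 : (k1.factorial : ℝ) ≠ 0 := Nat.cast_ne_zero.mpr k1.factorial_ne_zero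
  have h2 : (i.factorial : ℝ) ≠ 0 := Nat.cast_ne_zero.mpr i.factorial_ne_zero
  have h4 : ((M - k1 - i).factorial : ℝ) ≠ 0 :=
    Nat.cast_ne_zero.mpr (M - k1 - i).factorial_ne_zero
  have h5 : (2*(k1:ℝ)+(i:ℝ)+1) ≠ 0 := by positivity
  have h6 : ((i:ℝ)+1) ≠ 0 := by positivity
  have h7 : (2*(k1:ℝ)+((i:ℕ)+1:ℕ)) ≠ 0 := by push_cast; positivity
  rw [pow_mul, pow_mul, pow_succ]
  push_cast
  field_simp
  ring

lemma expectation_closed (p : ℝ) (hp : p ≠ 1) (M : ℕ) :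
    expectation_g (M+1) p
      = 2*((M:ℝ)+1)*(p - p^(2*(M+1)))/(2*((M:ℝ)+1)-1) + p^(2*(M+1)) := by
  have h1p : (1:ℝ) - p ≠ 0 := sub_ne_zero.mpr (Ne.symm hp)
  unfold expectation_g
  rw [Finset.sum_range_succ]
  have hlast : ∑ k2 ∈ range ((M+1) - (M+1) + 1), g (M+1) k2 * multinomialPMF (M+1) p (M+1) k2
      = 0 := by
    simp [g]
  rw [hlast, add_zero]
  have hstep : ∀ k1 ∈ range (M+1),
      ∑ k2 ∈ range ((M+1) - k1 + 1), g k1 k2 * multinomialPMF (M+1) p k1 k2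
      = (∑ i ∈ range (M - k1 + 1), g k1 (i+1) * multinomialPMF (M+1) p k1 (i+1))
        + g k1 0 * multinomialPMF (M+1) p k1 0 := by
    intro k1 hk1
    have hk1' : k1 ≤ M := Nat.lt_succ_iff.mp (mem_range.mp hk1)
    have h : (M+1) - k1 + 1 = (M - k1 + 1) + 1 := by omega
    rw [h, Finset.sum_range_succ']
  rw [Finset.sum_congr rfl hstep, Finset.sum_add_distrib]
  have hzero : ∑ k1 ∈ range (M+1), g k1 0 * multinomialPMF (M+1) p k1 0 = p^(2*(M+1)) := by
    rw [Finset.sum_eq_single 0]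
    · simp [g, multinomialPMF]
      rw [div_self (Nat.cast_ne_zero.mpr (M+1).factorial_ne_zero : (((M+1).factorial:ℕ):ℝ) ≠ 0), one_mul]
    · intro k1 _ hne
      simp [g, hne]
    · intro h
      exact absurd (mem_range.mpr (Nat.succ_pos M)) h
  rw [hzero]
  have hcont : ∀ k1 i, Continuous (u M p k1 i) := by
    intro k1 i
    unfold u
    fun_prop
  have hterm : ∀ k1 ∈ range (M+1), ∀ i ∈ range (M - k1 + 1),
      g k1 (i+1) * multinomialPMF (M+1) p k1 (i+1) = ∫ t in (0:ℝ)..1, u M p k1 i t := by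
    intro k1 hk1 i hi
    exact (u_integral M p k1 i (Nat.lt_succ_iff.mp (mem_range.mp hk1))
      (Nat.lt_succ_iff.mp (mem_range.mp hi))).symm
  have hS : ∑ k1 ∈ range (M+1), ∑ i ∈ range (M - k1 + 1),
      g k1 (i+1) * multinomialPMF (M+1) p k1 (i+1)
      = 2*((M:ℝ)+1)*(p - p^(2*(M+1)))/(2*((M:ℝ)+1)-1) := by
    calc ∑ k1 ∈ range (M+1), ∑ i ∈ range (M - k1 + 1),
        g k1 (i+1) * multinomialPMF (M+1) p k1 (i+1)
        = ∑ k1 ∈ range (M+1), ∑ i ∈ range (M - k1 + 1), ∫ t in (0:ℝ)..1, u M p k1 i t := by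
          exact Finset.sum_congr rfl fun k1 hk1 =>
            Finset.sum_congr rfl fun i hi => hterm k1 hk1 i hi
      _ = ∑ k1 ∈ range (M+1), ∫ t in (0:ℝ)..1, ∑ i ∈ range (M - k1 + 1), u M p k1 i t := by
          exact Finset.sum_congr rfl fun k1 _ =>
            (intervalIntegral.integral_finset_sum
              (fun i _ => (hcont k1 i).intervalIntegrable 0 1)).symm
      _ = ∫ t in (0:ℝ)..1, ∑ k1 ∈ range (M+1), ∑ i ∈ range (M - k1 + 1), u M p k1 i t := by
          exact (intervalIntegral.integral_finset_sum
            (fun k1 _ => (continuous_finset_sum _ fun i _ => hcont k1 i).intervalIntegrable 0 1)).symm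
      _ = ∫ t in (0:ℝ)..1, (2*((M:ℝ)+1)*p*(1-p)) * ((1-p)*t+p)^(2*M) := by
          refine intervalIntegral.integral_congr fun t _ => ?_
          unfold u
          simp only [← Finset.mul_sum]
          congr 1
          rw [trinomial, show ((1-p)*t)^2 + 2*p*(1-p)*t + p^2 = ((1-p)*t+p)^2 by ring,
            ← pow_mul]
      _ = (2*((M:ℝ)+1)*p*(1-p)) * ∫ t in (0:ℝ)..1, ((1-p)*t+p)^(2*M) :=
          intervalIntegral.integral_const_mul _ _
      _ = 2*((M:ℝ)+1)*(p - p^(2*(M+1)))/(2*((M:ℝ)+1)-1) := by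
          rw [intervalIntegral.integral_comp_mul_add (fun x => x^(2*M)) h1p p]
          norm_num [integral_pow]
          have h2 : (2*(M:ℝ)+1) ≠ 0 := by positivity
          rw [show 2*((M:ℝ)+1)-1 = 2*(M:ℝ)+1 by ring]
          field_simp
          ring
  rw [hS]

theorem error_probability_estimator_asymptotically_unbiased
    (p : ℝ) (hp : p ∈ Set.Ico (0 : ℝ) 1) :
    Filter.Tendsto
      (fun N : ℕ => 2 * (N : ℝ) * (p - p ^ (2 * N)) / (2 * (N : ℝ) - 1) + p ^ (2 * N))
      Filter.atTop (nhds p) ∧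
    Filter.Tendsto (fun N : ℕ => expectation_g N p) Filter.atTop (nhds p) := by
  obtain ⟨hp0, hp1⟩ := hp
  have hpow : Filter.Tendsto (fun N : ℕ => p^(2*N)) Filter.atTop (nhds 0) := by
    simp_rw [pow_mul]
    exact tendsto_pow_atTop_nhds_zero_of_lt_one (sq_nonneg p) (by nlinarith)
  have hden : Filter.Tendsto (fun N : ℕ => 2*(N:ℝ)-1) Filter.atTop Filter.atTop := by
    apply Filter.tendsto_atTop_add_const_right
    exact (tendsto_natCast_atTop_atTop).const_mul_atTop two_pos
  have hinv : Filter.Tendsto (fun N : ℕ => (2*(N:ℝ)-1)⁻¹) Filter.atTop (nhds 0) :=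
    hden.inv_tendsto_atTop
  have hfrac : Filter.Tendsto (fun N : ℕ => 2*(N:ℝ)/(2*(N:ℝ)-1)) Filter.atTop (nhds 1) := by
    have hev : (fun N : ℕ => 1 + (2*(N:ℝ)-1)⁻¹) =ᶠ[Filter.atTop]
        (fun N : ℕ => 2*(N:ℝ)/(2*(N:ℝ)-1)) := by
      filter_upwards [Filter.eventually_ge_atTop 1] with N hN
      have hN' : (1:ℝ) ≤ N := by exact_mod_cast hN
      have hne : (2*(N:ℝ)-1) ≠ 0 := by nlinarith
      field_simp
      ring
    have := (tendsto_const_nhds (x := (1:ℝ)) (f := Filter.atTop (α := ℕ))).add hinv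
    rw [add_zero] at this
    exact this.congr' hev
  have h1 : Filter.Tendsto
      (fun N : ℕ => 2 * (N : ℝ) * (p - p ^ (2 * N)) / (2 * (N : ℝ) - 1) + p ^ (2 * N))
      Filter.atTop (nhds p) := by
    have h := ((tendsto_const_nhds (x := p)).sub hpow).mul hfrac |>.add hpow
    rw [show (p - 0) * 1 + 0 = p by ring] at h
    exact h.congr (fun N => by ring)
  refine ⟨h1, h1.congr' ?_⟩
  filter_upwards [Filter.eventually_ge_atTop 1] with N hN
  obtain ⟨M, rfl⟩ : ∃ M, N = M+1 := ⟨N-1, by omega⟩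
  rw [expectation_closed p hp1.ne M]
  push_cast
  ring
end

section
/- For every integer N ≥ 46 and every p ∈ [0, 9/10], the bias of the error-probability estimator is below one percent: (p - p^{2N})/(2N - 1) < 1/100, i.e., E[g(K1,K2)] - p < 1/100 when (K1,K2,K3) follows a multinomial distribution with N trials and category probabilities ((1-p)^2, 2p(1-p), p^2). -/
open Finset

lemma fact_ne (n : ℕ) : ((n.factorial : ℝ)) ≠ 0 := by
  exact_mod_cast (Nat.factorial_pos n).ne'

/-- The trinomial theorem. -/
lemma trinomial_sum (M : ℕ) (A B C : ℝ) :
    ∑ k1 ∈ Finset.range (M + 1), ∑ k2 ∈ Finset.range (M - k1 + 1),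
      ((M.factorial : ℝ) / (k1.factorial * k2.factorial * (M - k1 - k2).factorial))
        * A ^ k1 * B ^ k2 * C ^ (M - k1 - k2) = (A + B + C) ^ M := by
  have h : A + B + C = A + (B + C) := by ring
  rw [h, add_pow]
  refine Finset.sum_congr rfl fun k1 hk1 => ?_
  rw [add_pow, Finset.mul_sum, Finset.sum_mul]
  refine Finset.sum_congr rfl fun k2 hk2 => ?_
  have hk1' : k1 ≤ M := Finset.mem_range_succ_iff.mp hk1
  have hk2' : k2 ≤ M - k1 := Finset.mem_range_succ_iff.mp hk2
  rw [Nat.cast_choose ℝ hk1', Nat.cast_choose ℝ hk2']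
  field_simp [fact_ne]

lemma term_eq (M k1 j : ℕ) (q p x : ℝ) :
    ((j + 1 : ℕ) : ℝ) *
      ((((M + 1).factorial : ℝ) / (k1.factorial * (j + 1).factorial * (M - k1 - j).factorial))
        * q ^ (2 * k1) * (2 * q * p) ^ (j + 1) * p ^ (2 * (M - k1 - j))) * x ^ (2 * k1 + j)
    = 2 * ((M : ℝ) + 1) * q * p *
        (((M.factorial : ℝ) / (k1.factorial * j.factorial * (M - k1 - j).factorial))
          * (q ^ 2 * x ^ 2) ^ k1 * (2 * q * p * x) ^ j * (p ^ 2) ^ (M - k1 - j)) := by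
  rw [Nat.factorial_succ M, Nat.factorial_succ j]
  push_cast
  field_simp [fact_ne]
  ring

/-- The weighted sum equals a power of an affine function. -/
lemma sum_eq_pow (N : ℕ) (hN : 1 ≤ N) (p x : ℝ) :
    ∑ k1 ∈ Finset.range (N + 1), ∑ k2 ∈ Finset.range (N - k1 + 1),
      (k2 : ℝ) * multinomialPMF N p k1 k2 * x ^ (2 * k1 + k2 - 1)
    = 2 * N * (1 - p) * p * ((1 - p) * x + p) ^ (2 * (N - 1)) := by
  obtain ⟨M, rfl⟩ : ∃ M, N = M + 1 := ⟨N - 1, (Nat.succ_pred_eq_of_pos hN).symm⟩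
  rw [Finset.sum_range_succ]
  have h0 : ∑ k2 ∈ Finset.range (M + 1 - (M + 1) + 1),
      (k2 : ℝ) * multinomialPMF (M + 1) p (M + 1) k2 * x ^ (2 * (M + 1) + k2 - 1) = 0 := by
    simp
  rw [h0, add_zero]
  have step1 : ∀ k1 ∈ Finset.range (M + 1),
      ∑ k2 ∈ Finset.range (M + 1 - k1 + 1),
        (k2 : ℝ) * multinomialPMF (M + 1) p k1 k2 * x ^ (2 * k1 + k2 - 1)
      = ∑ j ∈ Finset.range (M - k1 + 1),
          2 * ((M:ℝ) + 1) * (1 - p) * p *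
            (((M.factorial : ℝ) / (k1.factorial * j.factorial * (M - k1 - j).factorial))
              * ((1 - p) ^ 2 * x ^ 2) ^ k1 * (2 * (1 - p) * p * x) ^ j
              * (p ^ 2) ^ (M - k1 - j)) := by
    intro k1 hk1
    have hk1' : k1 ≤ M := Finset.mem_range_succ_iff.mp hk1
    have hr : M + 1 - k1 + 1 = (M - k1 + 1) + 1 := by omega
    rw [hr, Finset.sum_range_succ']
    simp only [Nat.cast_zero, zero_mul, add_zero]
    refine Finset.sum_congr rfl fun j hj => ?_
    have hj' : j ≤ M - k1 := Finset.mem_range_succ_iff.mp hj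
    have hsub : M + 1 - k1 - (j + 1) = M - k1 - j := by omega
    have hexp : 2 * k1 + (j + 1) - 1 = 2 * k1 + j := by omega
    rw [multinomialPMF, hsub, hexp]
    exact term_eq M k1 j (1 - p) p x
  rw [Finset.sum_congr rfl step1]
  have : ∑ k1 ∈ Finset.range (M + 1), ∑ j ∈ Finset.range (M - k1 + 1),
      2 * ((M:ℝ) + 1) * (1 - p) * p *
        (((M.factorial : ℝ) / (k1.factorial * j.factorial * (M - k1 - j).factorial))
          * ((1 - p) ^ 2 * x ^ 2) ^ k1 * (2 * (1 - p) * p * x) ^ j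
          * (p ^ 2) ^ (M - k1 - j))
      = 2 * ((M:ℝ) + 1) * (1 - p) * p *
          ∑ k1 ∈ Finset.range (M + 1), ∑ j ∈ Finset.range (M - k1 + 1),
            (((M.factorial : ℝ) / (k1.factorial * j.factorial * (M - k1 - j).factorial))
              * ((1 - p) ^ 2 * x ^ 2) ^ k1 * (2 * (1 - p) * p * x) ^ j
              * (p ^ 2) ^ (M - k1 - j)) := by
    rw [Finset.mul_sum]
    exact Finset.sum_congr rfl fun k1 _ => by rw [Finset.mul_sum]
  rw [this, trinomial_sum]
  have hsq : (1 - p) ^ 2 * x ^ 2 + 2 * (1 - p) * p * x + p ^ 2 = ((1 - p) * x + p) ^ 2 := by ring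
  rw [hsq, ← pow_mul]
  have : M + 1 - 1 = M := rfl
  rw [this]
  push_cast
  ring_nf

lemma pmf00 (N : ℕ) (p : ℝ) : multinomialPMF N p 0 0 = p ^ (2 * N) := by
  simp [multinomialPMF, fact_ne N]

/-- The exact expectation formula. -/
lemma expectation_eq (N : ℕ) (hN : 1 ≤ N) (p : ℝ) (hq : (1 : ℝ) - p ≠ 0) :
    expectation_g N p = (2 * N * p - p ^ (2 * N)) / (2 * (N : ℝ) - 1) := by
  have hsplit : ∀ k1 ∈ Finset.range (N + 1), ∀ k2 ∈ Finset.range (N - k1 + 1),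
      g k1 k2 * multinomialPMF N p k1 k2
        = (if k1 = 0 ∧ k2 = 0 then p ^ (2 * N) else 0)
          + (k2 : ℝ) / (2 * (k1:ℝ) + (k2:ℝ)) * multinomialPMF N p k1 k2 := by
    intro k1 _ k2 _
    by_cases h1 : k1 = 0 ∧ k2 = 0
    · obtain ⟨rfl, rfl⟩ := h1
      simp [g, pmf00]
    · by_cases h2 : k2 = 0
      · subst h2
        have hk1 : k1 ≠ 0 := by tauto
        simp [g, hk1, h1]
      · simp [g, h1, h2]
  have hA : expectation_g N p
      = p ^ (2 * N) + ∑ k1 ∈ Finset.range (N + 1), ∑ k2 ∈ Finset.range (N - k1 + 1),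
          (k2 : ℝ) / (2 * (k1:ℝ) + (k2:ℝ)) * multinomialPMF N p k1 k2 := by
    rw [expectation_g]
    rw [Finset.sum_congr rfl fun k1 hk1 => Finset.sum_congr rfl fun k2 hk2 =>
      hsplit k1 hk1 k2 hk2]
    rw [Finset.sum_congr rfl fun k1 _ => Finset.sum_add_distrib, Finset.sum_add_distrib]
    congr 1
    rw [Finset.sum_eq_single 0]
    · rw [Finset.sum_eq_single 0]
      · simp
      · intro b _ hb; simp [hb]
      · intro h; exact absurd (Finset.mem_range.mpr (by omega)) h
    · intro b _ hb
      apply Finset.sum_eq_zero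
      intro k2 _
      simp [hb]
    · intro h; exact absurd (Finset.mem_range.mpr (by omega)) h
  -- each term is an integral
  have hterm : ∀ k1 ∈ Finset.range (N + 1), ∀ k2 ∈ Finset.range (N - k1 + 1),
      (k2 : ℝ) / (2 * (k1:ℝ) + (k2:ℝ)) * multinomialPMF N p k1 k2
        = ∫ y in (0:ℝ)..1, (k2 : ℝ) * multinomialPMF N p k1 k2 * y ^ (2 * k1 + k2 - 1) := by
    intro k1 _ k2 _
    rw [intervalIntegral.integral_const_mul, integral_pow]
    rcases Nat.eq_zero_or_pos k2 with h | h
    · subst h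
      simp only [Nat.cast_zero, zero_div, zero_mul]
    · have he : 2 * k1 + k2 - 1 + 1 = 2 * k1 + k2 := by omega
      have hepos : 0 < 2 * k1 + k2 - 1 + 1 := by omega
      rw [one_pow, zero_pow hepos.ne']
      have hc : ((2 * k1 + k2 - 1 : ℕ) : ℝ) + 1 = 2 * (k1:ℝ) + (k2:ℝ) := by
        have h' : ((2 * k1 + k2 - 1 : ℕ) : ℝ) + 1 = (((2 * k1 + k2 - 1) + 1 : ℕ) : ℝ) := by
          push_cast
          ring
        rw [h', he]
        push_cast
        ring
      rw [hc]
      ring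
  have hint : ∀ (k1 k2 : ℕ), IntervalIntegrable
      (fun y => (k2 : ℝ) * multinomialPMF N p k1 k2 * y ^ (2 * k1 + k2 - 1))
      MeasureTheory.volume 0 1 :=
    fun k1 k2 => (continuous_const.mul (continuous_pow _)).intervalIntegrable 0 1
  have hB : ∑ k1 ∈ Finset.range (N + 1), ∑ k2 ∈ Finset.range (N - k1 + 1),
      (k2 : ℝ) / (2 * (k1:ℝ) + (k2:ℝ)) * multinomialPMF N p k1 k2
      = ∫ y in (0:ℝ)..1, ∑ k1 ∈ Finset.range (N + 1), ∑ k2 ∈ Finset.range (N - k1 + 1),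
          (k2 : ℝ) * multinomialPMF N p k1 k2 * y ^ (2 * k1 + k2 - 1) := by
    rw [Finset.sum_congr rfl fun k1 hk1 => Finset.sum_congr rfl fun k2 hk2 =>
      hterm k1 hk1 k2 hk2]
    rw [Finset.sum_congr rfl fun k1 _ =>
      (intervalIntegral.integral_finset_sum (fun k2 _ => hint k1 k2)).symm]
    exact (intervalIntegral.integral_finset_sum (fun k1 _ =>
      (continuous_finset_sum _ (fun k2 _ =>
        continuous_const.mul (continuous_pow _))).intervalIntegrable 0 1)).symm
  have hC : (∫ y in (0:ℝ)..1, ∑ k1 ∈ Finset.range (N + 1), ∑ k2 ∈ Finset.range (N - k1 + 1),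
        (k2 : ℝ) * multinomialPMF N p k1 k2 * y ^ (2 * k1 + k2 - 1))
      = ∫ y in (0:ℝ)..1, 2 * (N:ℝ) * (1 - p) * p * ((1 - p) * y + p) ^ (2 * (N - 1)) := by
    refine intervalIntegral.integral_congr fun y _ => ?_
    exact sum_eq_pow N hN p y
  have hD : (∫ y in (0:ℝ)..1, 2 * (N:ℝ) * (1 - p) * p * ((1 - p) * y + p) ^ (2 * (N - 1)))
      = 2 * (N:ℝ) * p * (1 - p ^ (2 * N - 1)) / (2 * (N:ℝ) - 1) := by
    rw [intervalIntegral.integral_const_mul,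
      intervalIntegral.integral_comp_mul_add (fun u => u ^ (2 * (N - 1))) hq p,
      integral_pow]
    have h1 : (1 - p) * 1 + p = 1 := by ring
    have h0 : (1 - p) * 0 + p = p := by ring
    rw [h1, h0, one_pow, smul_eq_mul]
    have he : 2 * (N - 1) + 1 = 2 * N - 1 := by omega
    rw [he]
    have hc : ((2 * (N - 1) : ℕ) : ℝ) + 1 = 2 * (N:ℝ) - 1 := by
      have h2 : ((2 * (N - 1) : ℕ) : ℝ) = 2 * ((N:ℝ) - 1) := by
        push_cast [Nat.cast_sub hN]
        ring
      rw [h2]; ring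
    rw [hc]
    have hden : (2 * (N:ℝ) - 1) ≠ 0 := by
      have h1N : (1:ℝ) ≤ (N:ℝ) := by exact_mod_cast hN
      nlinarith
    field_simp
  rw [hA, hB, hC, hD]
  have hden : (2 * (N:ℝ) - 1) ≠ 0 := by
    have : (1:ℝ) ≤ (N:ℝ) := by exact_mod_cast hN
    nlinarith
  have hpow : p ^ (2 * N) = p ^ (2 * N - 1) * p := by
    rw [← pow_succ]
    congr 1
    omega
  rw [hpow]
  field_simp
  ring

theorem bias_below_one_percent
    (N : ℕ) (hN : 46 ≤ N) (p : ℝ) (hp : p ∈ Set.Icc (0 : ℝ) (9 / 10)) :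
    (p - p ^ (2 * N)) / (2 * (N : ℝ) - 1) < 1 / 100 ∧
    expectation_g N p - p < 1 / 100 := by
  obtain ⟨hp0, hp9⟩ := hp
  have hq : (1 : ℝ) - p ≠ 0 := by
    intro h; nlinarith
  have hN1 : 1 ≤ N := by omega
  have hNr : (46 : ℝ) ≤ (N : ℝ) := by exact_mod_cast hN
  have hD : (91 : ℝ) ≤ 2 * (N : ℝ) - 1 := by linarith
  have hppow : 0 ≤ p ^ (2 * N) := by positivity
  have h1 : (p - p ^ (2 * N)) / (2 * (N : ℝ) - 1) < 1 / 100 := by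
    have hle : (p - p ^ (2 * N)) / (2 * (N : ℝ) - 1) ≤ (9 / 10) / 91 :=
      div_le_div₀ (by norm_num) (by linarith) (by norm_num) hD
    have : (9 / 10 : ℝ) / 91 < 1 / 100 := by norm_num
    linarith
  refine ⟨h1, ?_⟩
  rw [expectation_eq N hN1 p hq]
  have hden : (2 * (N:ℝ) - 1) ≠ 0 := by linarith
  have heq : (2 * (N:ℝ) * p - p ^ (2 * N)) / (2 * (N : ℝ) - 1) - p
      = (p - p ^ (2 * N)) / (2 * (N : ℝ) - 1) := by
    field_simp
    ring
  rw [heq]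
  exact h1
end
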